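/- A word of length n contains at most (n-1)/2 highly periodic runs. -/

import Mathlib

namespace HPB

variable {A : Type*}

def SegEq (u : ℕ → A) (s t m : ℕ) : Prop := ∀ r, r < m → u (s + r) = u (t + r)

def Lx (lt : A → A → Prop) (u : ℕ → A) (s m t m' : ℕ) : Prop :=
  (m < m' ∧ SegEq u s t m) ∨
    ∃ k, k < m ∧ k < m' ∧ SegEq u s t k ∧ lt (u (s + k)) (u (t + k))

def Lyn (lt : A → A → Prop) (u : ℕ → A) (s m : ℕ) : Prop :=
  ∀ k, 0 < k → k < m → Lx lt u s m (s + k) (m - k)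

section basic

variable {lt : A → A → Prop} {u : ℕ → A}

theorem segEq_symm {s t m} (h : SegEq u s t m) : SegEq u t s m :=
  fun r hr => (h r hr).symm

theorem lx_asymm (hA : ∀ a b : A, lt a b → ¬ lt b a) {s m t m'} (h1 : Lx lt u s m t m')
    (h2 : Lx lt u t m' s m) : False := by
  rcases h1 with ⟨hm, hE⟩ | ⟨k, hk1, hk2, hE, hlt⟩ <;>
    rcases h2 with ⟨hm', hE'⟩ | ⟨k', hk1', hk2', hE', hlt'⟩
  · omega
  · rw [← hE _ hk2'] at hlt'; exact hA _ _ hlt' hlt'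
  · rw [← hE' _ hk2] at hlt; exact hA _ _ hlt hlt
  · rcases Nat.lt_trichotomy k k' with h | h | h
    · rw [hE' _ h] at hlt; exact hA _ _ hlt hlt
    · subst h; exact hA _ _ hlt hlt'
    · rw [hE _ h] at hlt'; exact hA _ _ hlt' hlt'

theorem lx_total (hTot : ∀ a b : A, a ≠ b → lt a b ∨ lt b a) (s m t m' : ℕ) :
    (m = m' ∧ SegEq u s t m) ∨ Lx lt u s m t m' ∨ Lx lt u t m' s m := by
  classical
  by_cases hD : ∃ k, k < m ∧ k < m' ∧ u (s + k) ≠ u (t + k)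
  · set k := Nat.find hD with hkdef
    obtain ⟨hk1, hk2, hne⟩ : k < m ∧ k < m' ∧ u (s + k) ≠ u (t + k) := Nat.find_spec hD
    have hE : SegEq u s t k := by
      intro r hr
      by_contra hne'
      exact Nat.find_min hD hr ⟨by omega, by omega, hne'⟩
    rcases hTot _ _ hne with h | h
    · exact Or.inr (Or.inl (Or.inr ⟨k, hk1, hk2, hE, h⟩))
    · exact Or.inr (Or.inr (Or.inr ⟨k, hk2, hk1, segEq_symm hE, h⟩))
  · push_neg at hD
    rcases Nat.lt_trichotomy m m' with h | h | h
    · exact Or.inr (Or.inl (Or.inl ⟨h, fun r hr => hD r hr (by omega)⟩))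
    · exact Or.inl ⟨h, fun r hr => hD r hr (by omega)⟩
    · exact Or.inr (Or.inr (Or.inl ⟨h, fun r hr => (hD r (by omega) hr).symm⟩))

theorem lx_trans_eq (hT : ∀ a b c : A, lt a b → lt b c → lt a c) {s t w m : ℕ}
    (h1 : Lx lt u s m t m) (h2 : Lx lt u t m w m) : Lx lt u s m w m := by
  rcases h1 with ⟨hm, _⟩ | ⟨k, hk1, hk2, hE, hlt⟩
  · omega
  rcases h2 with ⟨hm', _⟩ | ⟨k', hk1', hk2', hE', hlt'⟩
  · omega
  rcases Nat.lt_trichotomy k k' with h | h | h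
  · exact Or.inr ⟨k, hk1, hk1, fun r hr => (hE r hr).trans (hE' r (by omega)),
      by rw [← hE' _ h]; exact hlt⟩
  · subst h
    exact Or.inr ⟨k, hk1, hk1, fun r hr => (hE r hr).trans (hE' r hr), hT _ _ _ hlt hlt'⟩
  · exact Or.inr ⟨k', hk1', hk1', fun r hr => (hE r (by omega)).trans (hE' r hr),
      by rw [hE _ h]; exact hlt'⟩

theorem lx_congr {s s' t t' m m'} (hs : SegEq u s s' m) (ht : SegEq u t t' m')
    (h : Lx lt u s m t m') : Lx lt u s' m t' m' := by
  rcases h with ⟨hm, hE⟩ | ⟨k, hk1, hk2, hE, hlt⟩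
  · exact Or.inl ⟨hm, fun r hr => by
      rw [← hs r hr, ← ht r (by omega)]; exact hE r hr⟩
  · exact Or.inr ⟨k, hk1, hk2, fun r hr => by
      rw [← hs r (by omega), ← ht r (by omega)]; exact hE r hr,
      by rw [← hs k hk1, ← ht k hk2]; exact hlt⟩

theorem lyn_congr {s s' m} (hs : SegEq u s s' m) (h : Lyn lt u s m) : Lyn lt u s' m := by
  intro k hk0 hkm
  have h1 : SegEq u (s + k) (s' + k) (m - k) := by
    intro r hr
    have e1 : s + k + r = s + (k + r) := by omega
    have e2 : s' + k + r = s' + (k + r) := by omega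
    rw [e1, e2]; exact hs _ (by omega)
  exact lx_congr hs h1 (h k hk0 hkm)

/-- A minimal element for an asymmetric transitive relation on a nonempty list. -/
theorem exists_list_min (R : ℕ → ℕ → Prop) (hA : ∀ a b, R a b → ¬ R b a)
    (hT : ∀ a b c, R a b → R b c → R a c) :
    ∀ l : List ℕ, l ≠ [] → ∃ m ∈ l, ∀ x ∈ l, ¬ R x m := by
  intro l
  induction l with
  | nil => intro h; exact absurd rfl h
  | cons a t ih =>
    intro _
    rcases eq_or_ne t [] with rfl | htne
    · exact ⟨a, by simp, by
        intro x hx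
        simp at hx; subst hx
        exact fun h => hA _ _ h h⟩
    · obtain ⟨m, hm, hmin⟩ := ih htne
      by_cases hR : R a m
      · refine ⟨a, by simp, ?_⟩
        intro x hx hxa
        rcases List.mem_cons.1 hx with rfl | hx
        · exact hA _ _ hxa hxa
        · exact hmin x hx (hT _ _ _ hxa hR)
      · refine ⟨m, List.mem_cons_of_mem _ hm, ?_⟩
        intro x hx hxm
        rcases List.mem_cons.1 hx with rfl | hx
        · exact hR hxm
        · exact hmin x hx hxm


end basic

section period

variable {u : ℕ → A} {i j p : ℕ}

-- HasPeriodOn inlined as hypothesis `hper : ∀ k, i ≤ k → k + p ≤ j → u k = u (k + p)`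

theorem per_mul (hper : ∀ k, i ≤ k → k + p ≤ j → u k = u (k + p)) :
    ∀ q a, i ≤ a → a + q * p ≤ j → u a = u (a + q * p) := by
  intro q
  induction q with
  | zero => intro a _ _; simp
  | succ q ih =>
    intro a ha haj
    have h1 : u a = u (a + p) := hper a ha (by nlinarith)
    have h2 : u (a + p) = u (a + p + q * p) := ih (a + p) (by omega) (by nlinarith)
    rw [h1, h2]; congr 1; ring

theorem per_reduce (hper : ∀ k, i ≤ k → k + p ≤ j → u k = u (k + p)) (hp : 0 < p)
    {x : ℕ} (hx : i ≤ x) (hxj : x ≤ j) : u x = u (i + (x - i) % p) := by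
  have hc : (x - i) / p * p = p * ((x - i) / p) := Nat.mul_comm _ _
  have h1 : i + (x - i) % p + ((x - i) / p) * p = x := by
    have := Nat.mod_add_div (x - i) p
    omega
  have := per_mul hper ((x - i) / p) (i + (x - i) % p) (by omega) (by omega)
  rw [this, h1]

theorem seg_shift (hper : ∀ k, i ≤ k → k + p ≤ j → u k = u (k + p))
    {a m : ℕ} (ha : i ≤ a) (ham : a + m + p ≤ j + 1) : SegEq u a (a + p) m := by
  intro r hr
  have : a + p + r = (a + r) + p := by omega
  rw [this]
  exact hper (a + r) (by omega) (by omega)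

/-- reduce window start mod p: windows of length p at `i+d` (d < 2p) equal window at `i + d % p`,
inside a run with `i + 3p ≤ j + 1`. -/
theorem win_mod (hper : ∀ k, i ≤ k → k + p ≤ j → u k = u (k + p)) (hp : 0 < p)
    (h3 : i + 3 * p ≤ j + 1) {d : ℕ} (hd : d < 2 * p) :
    SegEq u (i + d) (i + d % p) p := by
  rcases Nat.lt_or_ge d p with h | h
  · rw [Nat.mod_eq_of_lt h]; intro r _; rfl
  · have hmod : d % p = d - p := by
      rw [Nat.mod_eq_sub_mod (by omega), Nat.mod_eq_of_lt (by omega)]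
    rw [hmod]
    intro r hr
    have e1 : i + d + r = (i + (d - p) + r) + p := by omega
    rw [e1]
    exact (hper (i + (d - p) + r) (by omega) (by omega)).symm

/-- From a cyclic shorter period of the root window, get a shorter period on all of `[i..j]`. -/
theorem period_of_cyclic (hper : ∀ k, i ≤ k → k + p ≤ j → u k = u (k + p)) (hp : 0 < p)
    (hij : i + p ≤ j + 1) {k : ℕ} (hk0 : 0 < k) (hkp : k < p)
    (hcyc : ∀ ρ, ρ < p → u (i + ρ) = u (i + (ρ + k) % p)) :
    ∀ x, i ≤ x → x + k ≤ j → u x = u (x + k) := by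
  intro x hx hxj
  have h1 : u x = u (i + (x - i) % p) := per_reduce hper hp hx (by omega)
  have h2 : u (x + k) = u (i + (x + k - i) % p) := per_reduce hper hp (by omega) (by omega)
  have h3 : (x + k - i) % p = ((x - i) % p + k) % p := by
    have e : x + k - i = (x - i) + k := by omega
    rw [e, Nat.add_mod, Nat.mod_eq_of_lt hkp]
  have h4 := hcyc ((x - i) % p) (Nat.mod_lt _ hp)
  rw [h1, h2, h3, h4]

end period

section main

variable {u : ℕ → A} {i j p n : ℕ} {lt : A → A → Prop}

theorem pt_mod (hper : ∀ k, i ≤ k → k + p ≤ j → u k = u (k + p)) (hp : 0 < p) :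
    ∀ d, i + d ≤ j → u (i + d) = u (i + d % p) := by
  intro d
  induction d using Nat.strong_induction_on with
  | _ d ih =>
    intro hd
    rcases Nat.lt_or_ge d p with h | h
    · rw [Nat.mod_eq_of_lt h]
    · have e : u (i + (d - p)) = u (i + d) := by
        have h2 := hper (i + (d - p)) (by omega) (by omega)
        rw [h2]; congr 1; omega
      rw [← e, ih (d - p) (by omega) (by omega), Nat.mod_eq_sub_mod h]

theorem lyn_window
    (hper : ∀ k, i ≤ k → k + p ≤ j → u k = u (k + p)) (hp : 0 < p)
    (hmin : ∀ q, 1 ≤ q → q < p → ¬ (∀ x, i ≤ x → x + q ≤ j → u x = u (x + q)))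
    (h3 : i + 3 * p ≤ j + 1)
    (hA : ∀ a b : A, lt a b → ¬ lt b a)
    (hT : ∀ a b c : A, lt a b → lt b c → lt a c)
    (hTot : ∀ a b : A, a ≠ b → lt a b ∨ lt b a) :
    ∃ δ, δ < p ∧ Lyn lt u (i + δ) p := by
  obtain ⟨δ, hδl, hminδ⟩ := exists_list_min (fun d1 d2 => Lx lt u (i + d1) p (i + d2) p)
    (fun a b h1 h2 => lx_asymm hA h1 h2) (fun a b c h1 h2 => lx_trans_eq hT h1 h2)
    (List.range p) (by simp [List.range_eq_nil]; omega)
  have hδ : δ < p := List.mem_range.1 hδl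
  refine ⟨δ, hδ, ?_⟩
  intro k hk0 hkp
  set s := i + δ with hsdef
  rcases lx_total (u := u) (lt := lt) hTot s p (s + k) (p - k) with ⟨heq, _⟩ | h | H
  · omega
  · exact h
  exfalso
  have hnYX : ¬ Lx lt u (s + k) p s p := by
    intro hcon
    apply hminδ ((δ + k) % p) (List.mem_range.2 (Nat.mod_lt _ hp))
    have hwm : SegEq u (i + (δ + k)) (i + (δ + k) % p) p := win_mod hper hp h3 (by omega)
    have hsk : s + k = i + (δ + k) := by omega
    rw [hsk] at hcon
    exact lx_congr hwm (fun r _ => rfl) hcon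
  rcases lx_total (u := u) (lt := lt) hTot s p (s + k) p with ⟨_, hEq⟩ | hLyx | hYXl
  · -- equal windows: shorter period k on [i..j]
    apply hmin k hk0 hkp
    have hcyc : ∀ ρ, ρ < p → u (i + ρ) = u (i + (ρ + k) % p) := by
      intro ρ hρ
      set r := (ρ + p - δ) % p with hrdef
      have hrp : r < p := Nat.mod_lt _ hp
      have h1 : (δ + r) % p = ρ := by
        have e1 : (δ + r) % p = (δ + (ρ + p - δ)) % p := (Nat.mod_modEq _ p).add_left δ
        have e2 : δ + (ρ + p - δ) = ρ + p := by omega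
        rw [e1, e2, Nat.add_mod_right, Nat.mod_eq_of_lt hρ]
      have w1 : u (i + (δ + r)) = u (i + ρ) := by
        rw [pt_mod hper hp (δ + r) (by omega), h1]
      have w2 : u (s + r) = u (s + k + r) := hEq r hrp
      have w3 : u (i + (δ + k + r)) = u (i + (δ + k + r) % p) :=
        pt_mod hper hp (δ + k + r) (by omega)
      have m1 : (δ + k + r) % p = (ρ + k) % p := by
        have e : δ + k + r = (δ + r) + k := by omega
        rw [e, Nat.add_mod (δ + r) k p, h1, Nat.mod_eq_of_lt hkp]
      have e4 : s + r = i + (δ + r) := by omega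
      have e5 : s + k + r = i + (δ + k + r) := by omega
      calc u (i + ρ) = u (i + (δ + r)) := w1.symm
        _ = u (s + r) := by rw [e4]
        _ = u (s + k + r) := w2
        _ = u (i + (δ + k + r)) := by rw [e5]
        _ = u (i + (ρ + k) % p) := by rw [w3, m1]
    exact period_of_cyclic hper hp (by omega) hk0 hkp hcyc
  · -- hLyx : Lx u s p (s+k) p ; use H to finish
    rcases H with ⟨hc1, hEpre⟩ | ⟨r₂, hr₂, _, hE₂, hlt₂⟩
    swap
    · exact hnYX (Or.inr ⟨r₂, by omega, by omega, hE₂, hlt₂⟩)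
    rcases hLyx with ⟨hm, _⟩ | ⟨r, hr1, _, hEr, hltr⟩
    · omega
    have hrge : p - k ≤ r := by
      by_contra hc
      push_neg at hc
      have h1 := hEpre r hc
      rw [h1] at hltr
      exact hA _ _ hltr hltr
    set r' := r - (p - k) with hr'def
    have hr'k : r' < k := by omega
    have hTlx : Lx lt u (s + (p - k)) p s p := by
      refine Or.inr ⟨r', by omega, by omega, ?_, ?_⟩
      · intro q hq
        have h1 : u (s + (p - k) + q) = u (s + k + (p - k + q)) := by
          have h0 := hEr (p - k + q) (by omega)
          rw [← h0]; congr 1; omega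
        have h2 : u (s + q) = u (s + k + (p - k + q)) := by
          have h0 := hper (s + q) (by omega) (by omega)
          rw [h0]; congr 1; omega
        rw [h1, ← h2]
      · have e1 : s + (p - k) + r' = s + r := by omega
        have h2 : u (s + k + r) = u (s + r') := by
          have h0 := hper (s + r') (by omega) (by omega)
          rw [h0]; congr 1; omega
        rw [e1, ← h2]
        exact hltr
    have hw : SegEq u (i + (δ + (p - k))) (i + (δ + (p - k)) % p) p :=
      win_mod hper hp h3 (by omega)
    have e2 : s + (p - k) = i + (δ + (p - k)) := by omega
    rw [e2] at hTlx
    exact hminδ ((δ + (p - k)) % p) (List.mem_range.2 (Nat.mod_lt _ hp))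
      (lx_congr hw (fun r hr => rfl) hTlx)
  · exact hnYX hYXl

/-- No Lyndon word longer than `p` starts at a marked position of a run
(with the order chosen so that the letter after the run is `lt`-below its period copy). -/
theorem not_lyn_ext
    (hper : ∀ k', i ≤ k' → k' + p ≤ j → u k' = u (k' + p))
    (hord : j + 1 = n ∨ lt (u (j + 1)) (u (j + 1 - p)))
    (hp : 0 < p) (hs : i < s) (hsj : s + p ≤ j + 1) {m : ℕ} (hm : p < m) (hmn : s + m ≤ n)
    (hA : ∀ a b : A, lt a b → ¬ lt b a)
    (hL : Lyn lt u s m) : False := by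
  have hx := hL p hp hm
  rcases hx with ⟨hc, _⟩ | ⟨k, hk1, hk2, hE, hlt⟩
  · omega
  -- hE : SegEq u s (s+p) k, hlt : lt (u (s+k)) (u (s+p+k))
  rcases Nat.lt_trichotomy (s + p + k) (j + 1) with h | h | h
  · -- inside the run: period kills it
    have := hper (s + k) (by omega) (by omega)
    have e : s + k + p = s + p + k := by omega
    rw [e] at this
    rw [← this] at hlt
    exact hA _ _ hlt hlt
  · -- at the boundary
    rcases hord with hn | hord
    · omega
    have e1 : s + p + k = j + 1 := h
    have e2 : s + k = j + 1 - p := by omega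
    rw [e1, e2] at hlt
    exact hA _ _ hlt hord
  · -- past the boundary: equality at the boundary offset contradicts the mismatch
    rcases hord with hn | hord
    · omega
    have hr : j + 1 - p - s < k := by omega
    have he := hE _ hr
    have e1 : s + (j + 1 - p - s) = j + 1 - p := by omega
    have e2 : s + p + (j + 1 - p - s) = j + 1 := by omega
    rw [e1, e2] at he
    rw [← he] at hord
    exact hA _ _ hord hord

/-- A Lyndon word of length ≥ 2 rises at its first letter change. -/
theorem lyn_first_rise {s m : ℕ} (hm : 2 ≤ m)
    (hA : ∀ a b : A, lt a b → ¬ lt b a)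
    (hL : Lyn lt u s m) :
    ∃ d, 0 < d ∧ d < m ∧ (∀ r, r < d → u (s + r) = u s) ∧ lt (u s) (u (s + d)) := by
  classical
  have hne : ∃ r, 0 < r ∧ r < m ∧ u (s + r) ≠ u s := by
    by_contra hc
    push_neg at hc
    have h1 := hL (m - 1) (by omega) (by omega)
    rcases h1 with ⟨hlt, _⟩ | ⟨k, hk1, hk2, _, hlt⟩
    · omega
    have hk0 : k = 0 := by omega
    subst hk0
    have e1 : u (s + (m - 1) + 0) = u s := by
      have := hc (m - 1) (by omega) (by omega)
      rw [← this]; congr 1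
    rw [e1] at hlt
    have e2 : u (s + 0) = u s := by congr 1
    rw [e2] at hlt
    exact hA _ _ hlt hlt
  set d := Nat.find hne with hddef
  obtain ⟨hd0, hdm, hdne⟩ : 0 < d ∧ d < m ∧ u (s + d) ≠ u s := Nat.find_spec hne
  have hconst : ∀ r, r < d → u (s + r) = u s := by
    intro r hr
    rcases Nat.eq_zero_or_pos r with rfl | hr0
    · congr 1
    by_contra hne'
    exact Nat.find_min hne hr ⟨hr0, by omega, hne'⟩
  refine ⟨d, hd0, hdm, hconst, ?_⟩
  have h1 := hL d hd0 hdm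
  rcases h1 with ⟨hlt, _⟩ | ⟨k, hk1, hk2, hE, hlt⟩
  · omega
  rcases Nat.eq_zero_or_pos k with rfl | hk0
  · have e1 : u (s + 0) = u s := by congr 1
    rw [e1] at hlt
    exact hlt
  · exfalso
    have h0 := hE 0 hk0
    have e1 : u (s + 0) = u s := by congr 1
    have e2 : s + d + 0 = s + d := by omega
    rw [e1, e2] at h0
    exact hdne h0.symm

end main
end HPB

/-- The positions `i ≤ k ≤ j` (0-based) of `u` satisfy `u k = u (k + p)`
whenever both sides stay inside `[i..j]`. -/
def HasPeriodOn {A : Type*} (u : ℕ → A) (i j p : ℕ) : Prop :=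
  ∀ k, i ≤ k → k + p ≤ j → u k = u (k + p)

/-- `[i..j]` (0-based) is a run of the word `u[0..n-1]` with shortest period
`p`: `2p ≤ j - i + 1` and the periodicity extends neither left nor right. -/
def IsRunWith {A : Type*} (u : ℕ → A) (n i j p : ℕ) : Prop :=
  i ≤ j ∧ j < n ∧ 1 ≤ p ∧ HasPeriodOn u i j p ∧
    (∀ q, 1 ≤ q → q < p → ¬ HasPeriodOn u i j q) ∧
    2 * p ≤ j - i + 1 ∧
    (i = 0 ∨ u (i - 1) ≠ u (i - 1 + p)) ∧
    (j + 1 = n ∨ u (j + 1 - p) ≠ u (j + 1))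

/-- A highly periodic run: a run whose shortest period `p` satisfies
`3p ≤ j - i + 1`. -/
def IsHPRun {A : Type*} (u : ℕ → A) (n i j : ℕ) : Prop :=
  ∃ p, IsRunWith u n i j p ∧ 3 * p ≤ j - i + 1

namespace HPB

variable {A : Type*}

/-- A strict linear order on `A` (`b = true`) or its reverse (`b = false`). -/
def ltb (b : Bool) (a c : A) : Prop :=
  if b then WellOrderingRel a c else WellOrderingRel c a

theorem ltb_asymm (b : Bool) : ∀ a c : A, ltb b a c → ¬ ltb b c a := by
  intro a c h1 h2
  cases b <;> simp [ltb] at h1 h2 <;>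
    exact absurd (trans_of WellOrderingRel h1 h2) (irrefl_of WellOrderingRel _)

theorem ltb_trans (b : Bool) : ∀ a c d : A, ltb b a c → ltb b c d → ltb b a d := by
  intro a c d h1 h2
  cases b <;> simp [ltb] at h1 h2 ⊢
  · exact trans_of WellOrderingRel h2 h1
  · exact trans_of WellOrderingRel h1 h2

theorem ltb_total (b : Bool) : ∀ a c : A, a ≠ c → ltb b a c ∨ ltb b c a := by
  intro a c h
  rcases trichotomous_of WellOrderingRel a c with h1 | h1 | h1
  · cases b <;> simp [ltb] <;> [exact Or.inr h1; exact Or.inl h1]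
  · exact absurd h1 h
  · cases b <;> simp [ltb] <;> [exact Or.inl h1; exact Or.inr h1]

theorem ltb_cross {b b' : Bool} (hb : b ≠ b') {x y : A} (h1 : ltb b x y)
    (h2 : ltb b' x y) : False := by
  cases b <;> cases b' <;> simp_all [ltb]
  all_goals exact absurd (trans_of WellOrderingRel h1 h2) (irrefl_of WellOrderingRel _)

/-- A marked position of a highly periodic run: a non-initial occurrence of the
(chosen-order) Lyndon root. -/
def Token (u : ℕ → A) (n i j s : ℕ) : Prop :=
  ∃ p b, IsRunWith u n i j p ∧ 3 * p ≤ j - i + 1 ∧ i < s ∧ s + p ≤ j + 1 ∧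
    Lyn (ltb b) u s p ∧ (j + 1 = n ∨ ltb b (u (j + 1)) (u (j + 1 - p)))

theorem token_lt_aux {u : ℕ → A} {n i j i' j' s p p' : ℕ} {b b' : Bool}
    (hrun : IsRunWith u n i j p) (hs : i < s) (hsp : s + p ≤ j + 1)
    (hLyn : Lyn (ltb b) u s p)
    (hord : j + 1 = n ∨ ltb b (u (j + 1)) (u (j + 1 - p)))
    (hrun' : IsRunWith u n i' j' p') (hs' : i' < s) (hsp' : s + p' ≤ j' + 1)
    (hLyn' : Lyn (ltb b') u s p')
    (hpp : p < p') : False := by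
  obtain ⟨hij, hjn, hp1, hper, hminq, h2p, hleft, hright⟩ := hrun
  obtain ⟨hij', hjn', hp1', hper', hminq', h2p', hleft', hright'⟩ := hrun'
  by_cases hb : b = b'
  · subst hb
    exact not_lyn_ext hper hord (by omega) hs hsp hpp (by omega) (ltb_asymm b) hLyn'
  · by_cases hp2 : 2 ≤ p
    · obtain ⟨d, hd0, hdp, hdconst, hdlt⟩ := lyn_first_rise hp2 (ltb_asymm b) hLyn
      obtain ⟨d', hd0', hdp', hdconst', hdlt'⟩ :=
        lyn_first_rise (by omega) (ltb_asymm b') hLyn'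
      have hdd : d = d' := by
        rcases Nat.lt_trichotomy d d' with h | h | h
        · rw [hdconst' d h] at hdlt
          exact absurd hdlt (fun hc => ltb_asymm b _ _ hc hc)
        · exact h
        · rw [hdconst d' h] at hdlt'
          exact absurd hdlt' (fun hc => ltb_asymm b' _ _ hc hc)
      subst hdd
      exact ltb_cross hb hdlt hdlt'
    · -- p = 1
      have hp1e : p = 1 := by omega
      have h1 : u (s - 1) = u s := by
        have h0 := hper (s - 1) (by omega) (by omega)
        rw [h0]; congr 1; omega
      have h2 : u (s - 1) = u (s - 1 + p') := hper' (s - 1) (by omega) (by omega)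
      have hL := hLyn' (p' - 1) (by omega) (by omega)
      rcases hL with ⟨hc, _⟩ | ⟨k, hk1, hk2, _, hlt⟩
      · omega
      · have hk0 : k = 0 := by omega
        subst hk0
        have e1 : u (s + 0) = u s := by congr 1
        have e2 : u (s + (p' - 1) + 0) = u s := by
          rw [← h1, h2]; congr 1; omega
        rw [e1, e2] at hlt
        exact ltb_asymm b' _ _ hlt hlt

theorem token_unique {u : ℕ → A} {n i j i' j' s : ℕ}
    (h1 : Token u n i j s) (h2 : Token u n i' j' s) : i = i' ∧ j = j' := by
  obtain ⟨p, b, hrun, hhp, hs, hsp, hLyn, hord⟩ := h1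
  obtain ⟨p', b', hrun', hhp', hs', hsp', hLyn', hord'⟩ := h2
  rcases Nat.lt_trichotomy p p' with hpp | hpp | hpp
  · exact absurd (token_lt_aux hrun hs hsp hLyn hord hrun' hs' hsp' hLyn' hpp) id
  · -- merge
    subst hpp
    obtain ⟨hij, hjn, hp1, hper, _, h2p, hleft, hright⟩ := hrun
    obtain ⟨hij', hjn', _, hper', _, h2p', hleft', hright'⟩ := hrun'
    have h3 : i + 3 * p ≤ j + 1 := by omega
    have h3' : i' + 3 * p ≤ j' + 1 := by omega
    have hii : i = i' := by
      rcases Nat.lt_trichotomy i i' with h | h | h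
      · rcases hleft' with h0 | h0
        · omega
        · exact absurd (hper (i' - 1) (by omega) (by omega)) h0
      · exact h
      · rcases hleft with h0 | h0
        · omega
        · exact absurd (hper' (i - 1) (by omega) (by omega)) h0
    have hjj : j = j' := by
      rcases Nat.lt_trichotomy j j' with h | h | h
      · rcases hright with h0 | h0
        · omega
        · refine absurd ?_ h0
          have := hper' (j + 1 - p) (by omega) (by omega)
          rw [this]; congr 1; omega
      · exact h
      · rcases hright' with h0 | h0
        · omega
        · refine absurd ?_ h0
          have := hper (j' + 1 - p) (by omega) (by omega)
          rw [this]; congr 1; omega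
    exact ⟨hii, hjj⟩
  · exact absurd (token_lt_aux hrun' hs' hsp' hLyn' hord' hrun hs hsp hLyn hpp) id

theorem token_exists {u : ℕ → A} {n i j : ℕ} (h : IsHPRun u n i j) :
    ∃ s₁ s₂, i < s₁ ∧ s₁ < s₂ ∧ s₂ ≤ j ∧ Token u n i j s₁ ∧ Token u n i j s₂ := by
  obtain ⟨p, hrun, hhp⟩ := h
  obtain ⟨hij, hjn, hp1, hper, hminq, h2p, hleft, hright⟩ := hrun
  have h3 : i + 3 * p ≤ j + 1 := by omega
  have hbord : ∃ b : Bool, j + 1 = n ∨ ltb b (u (j + 1)) (u (j + 1 - p)) := by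
    by_cases hn : j + 1 = n
    · exact ⟨true, Or.inl hn⟩
    · rcases hright with h0 | h0
      · exact absurd h0 hn
      · rcases trichotomous_of WellOrderingRel (u (j + 1)) (u (j + 1 - p)) with h1 | h1 | h1
        · exact ⟨true, Or.inr (by simpa [ltb] using h1)⟩
        · exact absurd h1.symm h0
        · exact ⟨false, Or.inr (by simpa [ltb] using h1)⟩
  obtain ⟨b, hord⟩ := hbord
  obtain ⟨δ, hδ, hLynδ⟩ := lyn_window hper (by omega) hminq h3
    (ltb_asymm b) (ltb_trans b) (ltb_total b)
  have hrun : IsRunWith u n i j p := ⟨hij, hjn, hp1, hper, hminq, h2p, hleft, hright⟩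
  set s₁ := if δ = 0 then i + p else i + δ with hs₁
  have hs₁i : i < s₁ ∧ s₁ + 2 * p ≤ j + 1 := by
    rw [hs₁]; split <;> omega
  have hLyn₁ : Lyn (ltb b) u s₁ p := by
    rw [hs₁]
    split
    · rename_i h0
      subst h0
      refine lyn_congr ?_ hLynδ
      have hseg := seg_shift hper (a := i + 0) (m := p) (by omega) (by omega)
      simpa using hseg
    · exact hLynδ
  have hLyn₂ : Lyn (ltb b) u (s₁ + p) p := by
    refine lyn_congr ?_ hLyn₁
    exact seg_shift hper (a := s₁) (m := p) (by omega) (by omega)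
  refine ⟨s₁, s₁ + p, hs₁i.1, by omega, by omega, ?_, ?_⟩
  · exact ⟨p, b, hrun, hhp, hs₁i.1, by omega, hLyn₁, hord⟩
  · exact ⟨p, b, hrun, hhp, by omega, by omega, hLyn₂, hord⟩

end HPB

/-- A word of length `n` contains at most `(n-1)/2` highly periodic runs. -/
theorem hp_runs_upper_bound {A : Type*} (u : ℕ → A) (n : ℕ) :
    {q : ℕ × ℕ | IsHPRun u n q.1 q.2}.ncard ≤ (n - 1) / 2 := by
  classical
  set S := {q : ℕ × ℕ | IsHPRun u n q.1 q.2} with hS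
  have key : ∀ q : ℕ × ℕ, q ∈ S → ∃ s₁ s₂, q.1 < s₁ ∧ s₁ < s₂ ∧ s₂ ≤ q.2 ∧
      HPB.Token u n q.1 q.2 s₁ ∧ HPB.Token u n q.1 q.2 s₂ :=
    fun q hq => HPB.token_exists hq
  choose! f g hf1 hf2 hf3 hf4 hf5 using key
  have hjn : ∀ q : ℕ × ℕ, q ∈ S → q.2 < n := by
    rintro q ⟨p, hrun, _⟩
    exact hrun.2.1
  have huniq : ∀ q ∈ S, ∀ q' ∈ S, ∀ s, HPB.Token u n q.1 q.2 s →
      HPB.Token u n q'.1 q'.2 s → q = q' := by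
    intro q hq q' hq' s h1 h2
    obtain ⟨e1, e2⟩ := HPB.token_unique h1 h2
    exact Prod.ext e1 e2
  have hfin : S.Finite := by
    apply Set.Finite.of_finite_image (f := f)
    · exact (Set.finite_Icc 0 n).subset (by
        rintro x ⟨q, hq, rfl⟩
        simp only [Set.mem_Icc]
        have := hjn q hq
        have := hf1 q hq
        have := hf2 q hq
        have := hf3 q hq
        omega)
    · intro q hq q' hq' he
      exact huniq q hq q' hq' (f q) (hf4 q hq) (he ▸ hf4 q' hq')
  set T := hfin.toFinset with hT
  have hmemT : ∀ q, q ∈ T ↔ q ∈ S := fun q => hfin.mem_toFinset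
  have hcard : S.ncard = T.card := Set.ncard_eq_toFinset_card S hfin
  rw [hcard]
  set h : ℕ × ℕ → Finset ℕ := fun q => {f q, g q} with hh
  have htok : ∀ q ∈ T, ∀ s ∈ h q, HPB.Token u n q.1 q.2 s := by
    intro q hq s hs
    have hqS : q ∈ S := (hmemT q).1 hq
    rcases Finset.mem_insert.1 hs with rfl | hs
    · exact hf4 q hqS
    · rw [Finset.mem_singleton.1 hs]
      exact hf5 q hqS
  have hdisj : ∀ x ∈ T, ∀ y ∈ T, x ≠ y → Disjoint (h x) (h y) := by
    intro x hx y hy hxy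
    rw [Finset.disjoint_left]
    intro s hsx hsy
    exact hxy (huniq x ((hmemT x).1 hx) y ((hmemT y).1 hy) s
      (htok x hx s hsx) (htok y hy s hsy))
  have hcard2 : ∀ q ∈ T, (h q).card = 2 := by
    intro q hq
    have := hf2 q ((hmemT q).1 hq)
    rw [hh]
    rw [Finset.card_insert_of_notMem (by simp; omega), Finset.card_singleton]
  have hsub : T.biUnion h ⊆ Finset.Icc 1 (n - 1) := by
    intro s hs
    obtain ⟨q, hq, hsq⟩ := Finset.mem_biUnion.1 hs
    have hqS : q ∈ S := (hmemT q).1 hq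
    have h1 := hf1 q hqS
    have h2 := hf2 q hqS
    have h3 := hf3 q hqS
    have h4 := hjn q hqS
    rw [Finset.mem_Icc]
    rcases Finset.mem_insert.1 hsq with rfl | hsq
    · omega
    · rw [Finset.mem_singleton.1 hsq]; omega
  have hbu : (T.biUnion h).card = 2 * T.card := by
    rw [Finset.card_biUnion hdisj]
    rw [Finset.sum_congr rfl hcard2, Finset.sum_const, smul_eq_mul]
    ring
  have hle : 2 * T.card ≤ n - 1 := by
    rw [← hbu]
    calc (T.biUnion h).card ≤ (Finset.Icc 1 (n - 1)).card := Finset.card_le_card hsub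
      _ = n - 1 := by rw [Nat.card_Icc]; omega
  omega
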